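/- Let Y_1=e^{W} where W is a standard normal random variable, let δ>0, η>0, and for u>e set n(u)=⌊(1+η)(log u)²/(2·log(1+δ))⌋ and ε(u)=4·log(log u)/log u. Then P(Y_1 > u − n(u)·u^{1−ε(u)}) ~ P(Y_1>u) as u→∞; in particular, P(Y_1 > u − n·u^{1−ε(u)}) ~ P(Y_1>u) uniformly over integers 1≤n≤n(u). -/

import Mathlib

open MeasureTheory ProbabilityTheory Filter Real Set

/-- Survival function of the standard normal distribution: `Ψ x = P(Z > x)` for `Z ~ N(0,1)`. -/
noncomputable def stdGaussianSurvival (x : ℝ) : ℝ :=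
  ((gaussianReal 0 1) (Set.Ioi x)).toReal

/-- `L` is regularly varying at infinity with index `β`. -/
def RegVary (L : ℝ → ℝ) (β : ℝ) : Prop :=
  ∀ l : ℝ, 0 < l → Tendsto (fun u => L (l * u) / L u) atTop (nhds (l ^ β))

/-- Asymptotic equivalence at infinity: `f u / g u → 1` as `u → ∞`. -/
def AsymEquiv (f g : ℝ → ℝ) : Prop :=
  Tendsto (fun u => f u / g u) atTop (nhds 1)

lemma psi_eq (x : ℝ) :
    stdGaussianSurvival x = ∫ t in Set.Ioi x, gaussianPDFReal 0 1 t := by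
  rw [stdGaussianSurvival, gaussianReal_apply_eq_integral 0 one_ne_zero,
    ENNReal.toReal_ofReal (setIntegral_nonneg measurableSet_Ioi
      fun t _ => gaussianPDFReal_nonneg 0 1 t)]

lemma psi_anti {x y : ℝ} (h : x ≤ y) : stdGaussianSurvival y ≤ stdGaussianSurvival x :=
  ENNReal.toReal_mono (measure_ne_top _ _) (measure_mono (Set.Ioi_subset_Ioi h))

lemma pdf_anti {x y : ℝ} (hx : 0 ≤ x) (h : x ≤ y) :
    gaussianPDFReal 0 1 y ≤ gaussianPDFReal 0 1 x := by
  unfold gaussianPDFReal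
  refine mul_le_mul_of_nonneg_left ?_ (by positivity)
  rw [Real.exp_le_exp]
  simp only [sub_zero, NNReal.coe_one]
  rw [div_le_div_iff_of_pos_right (by norm_num)]
  nlinarith

lemma pdf_ratio (a y : ℝ) :
    gaussianPDFReal 0 1 a / gaussianPDFReal 0 1 y = Real.exp ((y^2 - a^2)/2) := by
  unfold gaussianPDFReal
  rw [mul_div_mul_left _ _ (by positivity), ← Real.exp_sub]
  norm_num
  ring_nf

lemma psi_lb {x : ℝ} (hx : 0 < x) :
    x⁻¹ * gaussianPDFReal 0 1 (x + x⁻¹) ≤ stdGaussianSurvival x := by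
  rw [psi_eq]
  have hint := (integrable_gaussianPDFReal 0 1).restrict (s := Set.Ioc x (x + x⁻¹))
  have h1 : ∫ t in Set.Ioc x (x + x⁻¹), gaussianPDFReal 0 1 t
      ≤ ∫ t in Set.Ioi x, gaussianPDFReal 0 1 t := by
    refine setIntegral_mono_set ((integrable_gaussianPDFReal 0 1).restrict)
      (Filter.Eventually.of_forall fun t => gaussianPDFReal_nonneg 0 1 t) ?_
    exact HasSubset.Subset.eventuallyLE Set.Ioc_subset_Ioi_self
  refine le_trans ?_ h1
  have h2 : ∫ t in Set.Ioc x (x + x⁻¹), gaussianPDFReal 0 1 (x + x⁻¹)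
      ≤ ∫ t in Set.Ioc x (x + x⁻¹), gaussianPDFReal 0 1 t := by
    refine setIntegral_mono_on (integrableOn_const measure_Ioc_lt_top.ne) hint
      measurableSet_Ioc fun t ht => pdf_anti (le_of_lt (lt_of_lt_of_le hx ht.1.le)) ht.2
  refine le_trans (le_of_eq ?_) h2
  rw [setIntegral_const, measureReal_def, Real.volume_Ioc, add_sub_cancel_left,
    ENNReal.toReal_ofReal (by positivity), smul_eq_mul]

lemma psi_diff_ub {x y : ℝ} (hx : 0 ≤ x) (h : x ≤ y) :
    stdGaussianSurvival x - stdGaussianSurvival y ≤ (y - x) * gaussianPDFReal 0 1 x := by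
  have hsplit : stdGaussianSurvival x = (∫ t in Set.Ioc x y, gaussianPDFReal 0 1 t)
      + stdGaussianSurvival y := by
    rw [psi_eq, psi_eq, ← setIntegral_union (Set.Ioc_disjoint_Ioi le_rfl) measurableSet_Ioi
      ((integrable_gaussianPDFReal 0 1).restrict) ((integrable_gaussianPDFReal 0 1).restrict),
      Set.Ioc_union_Ioi_eq_Ioi h]
  rw [hsplit]
  ring_nf
  have h2 : ∫ t in Set.Ioc x y, gaussianPDFReal 0 1 t
      ≤ ∫ t in Set.Ioc x y, gaussianPDFReal 0 1 x := by
    refine setIntegral_mono_on ((integrable_gaussianPDFReal 0 1).restrict)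
      (integrableOn_const measure_Ioc_lt_top.ne)
      measurableSet_Ioc fun t ht => pdf_anti hx ht.1.le
  refine le_trans h2 (le_of_eq ?_)
  rw [setIntegral_const, measureReal_def, Real.volume_Ioc, ENNReal.toReal_ofReal (by linarith), smul_eq_mul]
  ring

lemma psi_pos {x : ℝ} (hx : 0 < x) : 0 < stdGaussianSurvival x :=
  lt_of_lt_of_le (mul_pos (inv_pos.2 hx) (gaussianPDFReal_pos 0 1 _ one_ne_zero)) (psi_lb hx)

lemma psi_ratio_tendsto (a b : ℝ → ℝ) (hab : ∀ᶠ u in atTop, a u ≤ b u)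
    (ha0 : ∀ᶠ u in atTop, 0 ≤ a u)
    (hb : Tendsto b atTop atTop)
    (hd : Tendsto (fun u => b u * (b u - a u)) atTop (nhds 0)) :
    Tendsto (fun u => stdGaussianSurvival (a u) / stdGaussianSurvival (b u)) atTop (nhds 1) := by
  have hb1 : ∀ᶠ u in atTop, 1 ≤ b u := hb.eventually_ge_atTop 1
  set R : ℝ → ℝ := fun u => stdGaussianSurvival (a u) / stdGaussianSurvival (b u) with hR
  set F : ℝ → ℝ :=
    fun u => (b u * (b u - a u)) * Real.exp (b u * (b u - a u) + (1 + (2 * (b u)^2)⁻¹)) with hF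
  have hFt : Tendsto F atTop (nhds 0) := by
    have hbsq : Tendsto (fun u => 2 * (b u)^2) atTop atTop :=
      ((tendsto_pow_atTop (two_ne_zero)).comp hb).const_mul_atTop two_pos
    have h2 : Tendsto (fun u => (2*(b u)^2)⁻¹) atTop (nhds 0) := hbsq.inv_tendsto_atTop
    have h1 : Tendsto (fun u => b u * (b u - a u) + (1 + (2*(b u)^2)⁻¹)) atTop
        (nhds (0 + (1 + 0))) := hd.add (tendsto_const_nhds.add h2)
    have := hd.mul ((Real.continuous_exp.tendsto _).comp h1)
    rw [hF]; simpa only [zero_mul, Function.comp_def] using this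
  have key : ∀ᶠ u in atTop, (0 ≤ R u - 1 ∧ R u - 1 ≤ F u) := by
    filter_upwards [hab, ha0, hb1] with u h1 h2 h3
    have hbpos : (0:ℝ) < b u := lt_of_lt_of_le one_pos h3
    have hΨb : 0 < stdGaussianSurvival (b u) := psi_pos hbpos
    have hΨab : stdGaussianSurvival (b u) ≤ stdGaussianSurvival (a u) := psi_anti h1
    constructor
    · rw [sub_nonneg, hR]
      exact (one_le_div hΨb).2 hΨab
    · have hRdiff : R u - 1 = (stdGaussianSurvival (a u) - stdGaussianSurvival (b u)) /
          stdGaussianSurvival (b u) := by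
        rw [hR]; field_simp
      rw [hRdiff]
      have hd0 : 0 ≤ b u - a u := by linarith
      set y := b u + (b u)⁻¹ with hy
      have hφy : 0 < gaussianPDFReal 0 1 y := gaussianPDFReal_pos 0 1 _ one_ne_zero
      have hφa : 0 ≤ gaussianPDFReal 0 1 (a u) := gaussianPDFReal_nonneg 0 1 _
      have step : (stdGaussianSurvival (a u) - stdGaussianSurvival (b u)) /
          stdGaussianSurvival (b u) ≤
          ((b u - a u) * gaussianPDFReal 0 1 (a u)) / ((b u)⁻¹ * gaussianPDFReal 0 1 y) :=
        div_le_div₀ (by positivity) (psi_diff_ub h2 h1)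
          (by positivity) (psi_lb hbpos)
      refine le_trans step ?_
      have heq : ((b u - a u) * gaussianPDFReal 0 1 (a u)) / ((b u)⁻¹ * gaussianPDFReal 0 1 y)
          = (b u * (b u - a u)) * (gaussianPDFReal 0 1 (a u) / gaussianPDFReal 0 1 y) := by
        field_simp
      rw [heq, pdf_ratio]
      refine mul_le_mul_of_nonneg_left ?_ (by positivity)
      rw [Real.exp_le_exp]
      have hbinv : b u * (b u)⁻¹ = 1 := mul_inv_cancel₀ (ne_of_gt hbpos)
      have hysq : y^2 = (b u)^2 + 2 + ((b u)⁻¹)^2 := by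
        rw [hy]; ring_nf; nlinarith [hbinv]
      have hinv2 : ((b u)⁻¹)^2 = ((b u)^2)⁻¹ := inv_pow _ _
      have hb2 : (0:ℝ) < (b u)^2 := by positivity
      have h4 : (2*(b u)^2)⁻¹ = ((b u)^2)⁻¹ / 2 := by rw [mul_inv]; ring
      nlinarith [sq_nonneg (b u - a u), hysq, hinv2, h4]
  have hsub : Tendsto (fun u => R u - 1) atTop (nhds 0) :=
    tendsto_of_tendsto_of_tendsto_of_le_of_le' tendsto_const_nhds hFt
      (key.mono fun u h => h.1) (key.mono fun u h => h.2)
  have := hsub.add_const 1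
  simpa using this

/-- First part of Lemma 2: shifting a standard log-normal tail by `n(u)·u^{1-ε(u)}`
does not change its asymptotics, uniformly in `1 ≤ n ≤ n(u)`. -/
theorem lognormal_tail_shift_negligible
    {Ω : Type*} [MeasurableSpace Ω] (P : Measure Ω) [IsProbabilityMeasure P]
    (W : Ω → ℝ) (hWmeas : Measurable W)
    (hWlaw : Measure.map W P = gaussianReal 0 1)
    (δ η : ℝ) (hδ : 0 < δ) (hη : 0 < η)
    (nn : ℝ → ℕ) (hnn : ∀ u, Real.exp 1 < u →
      nn u = ⌊(1 + η) * (log u) ^ 2 / (2 * log (1 + δ))⌋₊)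
    (ε : ℝ → ℝ) (hε : ∀ u, Real.exp 1 < u → ε u = 4 * log (log u) / log u) :
    AsymEquiv
      (fun u => (P {ω | u - (nn u : ℝ) * u ^ (1 - ε u) < exp (W ω)}).toReal)
      (fun u => (P {ω | u < exp (W ω)}).toReal) ∧
    ∀ θ > (0 : ℝ), ∀ᶠ u in atTop, ∀ m : ℕ, 1 ≤ m → m ≤ nn u →
      |(P {ω | u - (m : ℝ) * u ^ (1 - ε u) < exp (W ω)}).toReal /
        (P {ω | u < exp (W ω)}).toReal - 1| < θ := by
  have hlogδ : 0 < Real.log (1 + δ) := Real.log_pos (by linarith)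
  set C : ℝ := (1 + η) / (2 * Real.log (1 + δ)) with hC
  have hCpos : 0 < C := by positivity
  set s : ℝ → ℝ := fun u => u ^ (1 - ε u) with hs
  set A : ℝ → ℝ := fun u => u - (nn u : ℝ) * s u with hA
  have prob_eq : ∀ v : ℝ, 0 < v →
      (P {ω | v < Real.exp (W ω)}).toReal = stdGaussianSurvival (Real.log v) := by
    intro v hv
    have hset : {ω | v < Real.exp (W ω)} = W ⁻¹' (Set.Ioi (Real.log v)) := by
      ext ω
      simp only [Set.mem_setOf_eq, Set.mem_preimage, Set.mem_Ioi]
      exact (Real.log_lt_iff_lt_exp hv).symm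
    rw [stdGaussianSurvival, hset, ← hWlaw, Measure.map_apply hWmeas measurableSet_Ioi]
  have hab : ∀ᶠ u in atTop, (0 < u ∧ 0 < A u ∧ 0 ≤ Real.log (A u) ∧
      Real.log (A u) ≤ Real.log u ∧ 1 < Real.log u ∧ 0 ≤ s u ∧
      0 ≤ Real.log u * (Real.log u - Real.log (A u)) ∧
      Real.log u * (Real.log u - Real.log (A u)) ≤ 2 * C / Real.log u) := by
    have h1 : ∀ᶠ u : ℝ in atTop, 2 ≤ u := eventually_ge_atTop 2
    have h2 : ∀ᶠ u : ℝ in atTop, Real.exp 1 < u := eventually_gt_atTop _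
    have h3 : ∀ᶠ u : ℝ in atTop, 1 < Real.log u := tendsto_log_atTop.eventually_gt_atTop 1
    have h4 : ∀ᶠ u : ℝ in atTop, 2 * C ≤ (Real.log u)^2 :=
      ((tendsto_pow_atTop two_ne_zero).comp tendsto_log_atTop).eventually_ge_atTop _
    filter_upwards [h1, h2, h3, h4] with u hu2 hue hl1 hl2
    have hu0 : 0 < u := by linarith
    have hL0 : 0 < Real.log u := by linarith
    have hL20 : 0 < (Real.log u)^2 := by positivity
    have hse : s u = u / (Real.log u)^4 := by
      rw [hs]; dsimp only
      rw [Real.rpow_def_of_pos hu0, hε u hue]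
      have he1 : Real.log u * (1 - 4 * Real.log (Real.log u) / Real.log u)
          = Real.log u - 4 * Real.log (Real.log u) := by field_simp
      rw [he1, Real.exp_sub, Real.exp_log hu0,
        show (4:ℝ) * Real.log (Real.log u) = ((4:ℕ):ℝ) * Real.log (Real.log u) by norm_num,
        Real.exp_nat_mul, Real.exp_log hL0]
    have hs0 : 0 ≤ s u := by rw [hse]; positivity
    have hnle : (nn u : ℝ) ≤ C * (Real.log u)^2 := by
      rw [hnn u hue]
      refine le_trans (Nat.floor_le (by positivity)) (le_of_eq ?_)
      rw [hC]; ring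
    have hSle : (nn u : ℝ) * s u ≤ C * u / (Real.log u)^2 := by
      have hcalc : (nn u : ℝ) * (u / (Real.log u)^4)
          ≤ (C * (Real.log u)^2) * (u / (Real.log u)^4) :=
        mul_le_mul_of_nonneg_right hnle (by positivity)
      rw [hse]
      refine le_trans hcalc (le_of_eq ?_)
      field_simp
    have hC2 : C / (Real.log u)^2 ≤ 1/2 := by
      rw [div_le_div_iff₀ hL20 (by norm_num : (0:ℝ) < 2)]
      linarith
    have hS0 : 0 ≤ (nn u : ℝ) * s u := mul_nonneg (Nat.cast_nonneg _) hs0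
    have hSu : (nn u : ℝ) * s u ≤ u / 2 := by
      refine le_trans hSle ?_
      have he2 : C * u / (Real.log u)^2 = (C / (Real.log u)^2) * u := by ring
      rw [he2]
      calc (C / (Real.log u)^2) * u ≤ (1/2) * u :=
            mul_le_mul_of_nonneg_right hC2 hu0.le
        _ = u / 2 := by ring
    have hA0 : 0 < A u := by rw [hA]; dsimp only; linarith
    have hA1 : 1 ≤ A u := by rw [hA]; dsimp only; linarith
    have hAu : A u ≤ u := by rw [hA]; dsimp only; linarith
    have hla : Real.log (A u) ≤ Real.log u := Real.log_le_log hA0 hAu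
    have hla0 : 0 ≤ Real.log (A u) := Real.log_nonneg hA1
    refine ⟨hu0, hA0, hla0, hla, hl1, hs0, mul_nonneg hL0.le (by linarith), ?_⟩
    have hdiff : Real.log u - Real.log (A u) = Real.log (u / A u) := by
      rw [Real.log_div (ne_of_gt hu0) (ne_of_gt hA0)]
    have hratio : Real.log (u / A u) ≤ u / A u - 1 :=
      Real.log_le_sub_one_of_pos (by positivity)
    have h5 : u / A u - 1 = ((nn u : ℝ) * s u) / A u := by
      rw [hA]; dsimp only
      have hne : u - (nn u : ℝ) * s u ≠ 0 := ne_of_gt (by linarith)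
      rw [div_sub_one hne]; ring
    have h6 : ((nn u : ℝ) * s u) / A u ≤ (C * u / (Real.log u)^2) / (u/2) :=
      div_le_div₀ (by positivity) hSle (by positivity) (by linarith)
    have h7 : (C * u / (Real.log u)^2) / (u/2) = 2 * C / (Real.log u)^2 := by
      field_simp
    have h8 : Real.log u - Real.log (A u) ≤ 2 * C / (Real.log u)^2 := by
      rw [hdiff]; rw [h7] at h6; linarith
    calc Real.log u * (Real.log u - Real.log (A u))
        ≤ Real.log u * (2 * C / (Real.log u)^2) := mul_le_mul_of_nonneg_left h8 hL0.le
      _ = 2 * C / Real.log u := by field_simp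
  have hdt : Tendsto (fun u => Real.log u * (Real.log u - Real.log (A u))) atTop (nhds 0) := by
    refine tendsto_of_tendsto_of_tendsto_of_le_of_le' tendsto_const_nhds
      (tendsto_const_nhds.div_atTop tendsto_log_atTop)
      (hab.mono fun u h => h.2.2.2.2.2.2.1) (hab.mono fun u h => h.2.2.2.2.2.2.2)
  have hmain : Tendsto (fun u => stdGaussianSurvival (Real.log (A u)) /
      stdGaussianSurvival (Real.log u)) atTop (nhds 1) :=
    psi_ratio_tendsto _ _ (hab.mono fun u h => h.2.2.2.1) (hab.mono fun u h => h.2.2.1)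
      tendsto_log_atTop hdt
  have part1 : AsymEquiv
      (fun u => (P {ω | A u < Real.exp (W ω)}).toReal)
      (fun u => (P {ω | u < Real.exp (W ω)}).toReal) := by
    rw [AsymEquiv]
    refine Tendsto.congr' ?_ hmain
    filter_upwards [hab] with u h
    rw [prob_eq (A u) h.2.1, prob_eq u h.1]
  refine ⟨part1, ?_⟩
  intro θ hθ
  have hθ' := Metric.tendsto_nhds.mp part1 θ hθ
  filter_upwards [hθ', hab] with u hu h
  intro m hm1 hm2
  obtain ⟨hu0, hA0, _, _, hl1, hs0, -, -⟩ := h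
  have hgpos : 0 < (P {ω | u < Real.exp (W ω)}).toReal := by
    rw [prob_eq u hu0]; exact psi_pos (by linarith)
  have hmono : ∀ c c' : ℝ, c' ≤ c → (P {ω | c < Real.exp (W ω)}).toReal ≤
      (P {ω | c' < Real.exp (W ω)}).toReal := fun c c' hcc =>
    ENNReal.toReal_mono (measure_ne_top _ _)
      (measure_mono fun ω hω => lt_of_le_of_lt hcc hω)
  have hms : (m : ℝ) * s u ≤ (nn u : ℝ) * s u :=
    mul_le_mul_of_nonneg_right (Nat.cast_le.2 hm2) hs0
  have hm0 : 0 ≤ (m : ℝ) * s u := mul_nonneg (Nat.cast_nonneg _) hs0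
  have hlow : (P {ω | u < Real.exp (W ω)}).toReal ≤
      (P {ω | u - (m : ℝ) * s u < Real.exp (W ω)}).toReal :=
    hmono u (u - (m : ℝ) * s u) (by linarith)
  have hupp : (P {ω | u - (m : ℝ) * s u < Real.exp (W ω)}).toReal ≤
      (P {ω | A u < Real.exp (W ω)}).toReal := by
    refine hmono _ _ ?_
    rw [hA]; dsimp only; linarith
  rw [Real.dist_eq] at hu
  have hR1 : 1 ≤ (P {ω | u - (m : ℝ) * s u < Real.exp (W ω)}).toReal /
      (P {ω | u < Real.exp (W ω)}).toReal := (one_le_div hgpos).2 hlow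
  rw [abs_of_nonneg (by linarith)]
  have hRle : (P {ω | u - (m : ℝ) * s u < Real.exp (W ω)}).toReal /
      (P {ω | u < Real.exp (W ω)}).toReal ≤
      (P {ω | A u < Real.exp (W ω)}).toReal /
      (P {ω | u < Real.exp (W ω)}).toReal := by
    gcongr
  have := le_abs_self ((P {ω | A u < Real.exp (W ω)}).toReal /
      (P {ω | u < Real.exp (W ω)}).toReal - 1)
  linarith
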